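/- Let K₁ ⊆ [a,b] and K₂ ⊆ [c,d] be Cantor sets with a,b ∈ K₁ and c,d ∈ K₂. Suppose the connected components of [a,b] \ K₁ are exactly the members of two disjoint sequences {I_i}_{i∈ℕ} and {I'_i}_{i∈ℕ} (I_i ∩ I'_k = ∅ for all i,k, and every component is one of them), with the set of endpoints of the I_i dense in K₁ and the set of endpoints of the I'_i dense in K₁; and suppose analogously the connected components of [c,d] \ K₂ are the members of two disjoint sequences {J_j}_{j∈ℕ} and {J'_j}_{j∈ℕ}, each with endpoint set dense in K₂. Then there exists an increasing homeomorphism ψ : [a,b] → [c,d] such that ψ(K₁) = K₂ and ψ(⋃_i I_i) = ⋃_j J_j. -/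

import Mathlib

open Set Topology Filter

/-- The circle. -/
abbrev S1 := AddCircle (1 : ℝ)

/-- Apply a word `l = [i₁, …, i_k]` of generators: `f i₁ ∘ ⋯ ∘ f i_k`. -/
def applyWord {X : Type*} {n : ℕ} (f : Fin n → X → X) (l : List (Fin n)) (x : X) : X :=
  l.foldr (fun i y => f i y) x

/-- The orbit of `x` under the semigroup `IFS(f₁,…,fₙ)` (nonempty words). -/
def orbitIFS {X : Type*} {n : ℕ} (f : Fin n → X → X) (x : X) : Set X :=
  {y | ∃ l : List (Fin n), l ≠ [] ∧ y = applyWord f l x}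

/-- `M` is a minimal set for the IFS generated by `f₁,…,fₙ`. -/
def IsMinimalIFS {X : Type*} [TopologicalSpace X] {n : ℕ} (f : Fin n → X → X)
    (M : Set X) : Prop :=
  M.Nonempty ∧ IsClosed M ∧ (∀ i, f i '' M ⊆ M) ∧
    ∀ x ∈ M, closure (orbitIFS f x) = M

/-- A Cantor set: nonempty, compact, perfect and totally disconnected. -/
def IsCantorSet {X : Type*} [TopologicalSpace X] (K : Set X) : Prop :=
  K.Nonempty ∧ IsCompact K ∧ Perfect K ∧ IsTotallyDisconnected K

/-- `X` is (homeomorphic to) the circle or a (nondegenerate) closed interval. -/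
def IsCircleOrInterval (X : Type*) [TopologicalSpace X] : Prop :=
  Nonempty (X ≃ₜ S1) ∨ ∃ a b : ℝ, a < b ∧ Nonempty (X ≃ₜ Set.Icc a b)

/-- The canonical decomposition `M = 𝓘 ∪ K ∪ N` of a closed set:
`𝓘` is the interior (union of components of the interior), `K` is the maximal
Cantor set contained in `M \ 𝓘` (possibly empty), and `N` is the countable remainder. -/
def IsCanonicalDecomp {X : Type*} [TopologicalSpace X] (M I K N : Set X) : Prop :=
  I = interior M ∧
  (IsCantorSet K ∨ K = ∅) ∧
  K ⊆ M \ I ∧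
  (∀ K₁ : Set X, IsCantorSet K₁ → K ⊆ K₁ → K₁ ⊆ M \ I → K₁ = K) ∧
  N = M \ (I ∪ K) ∧
  N.Countable

/-- A symmetric Cantorval: a nonempty compact set which is the closure of its interior,
and such that both endpoints of every nontrivial connected component are accumulation
points of one-point connected components. -/
def IsSymmetricCantorval {X : Type*} [TopologicalSpace X] (M : Set X) : Prop :=
  M.Nonempty ∧ IsCompact M ∧ M = closure (interior M) ∧
  ∀ x ∈ M, ¬ (connectedComponentIn M x).Subsingleton →
    ∀ z ∈ frontier (connectedComponentIn M x),
      AccPt z (𝓟 {y | y ∈ M ∧ connectedComponentIn M y = {y}})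


namespace Stmt17Aux


variable {α β : Type*} [LinearOrder α] [LinearOrder β]

/-- colored density for finsets -/
def CDense (c : α → Bool) : Prop :=
  ∀ lo hi : Finset α, (∀ x ∈ lo, ∀ y ∈ hi, x < y) → ∀ col : Bool,
    ∃ m, c m = col ∧ (∀ x ∈ lo, x < m) ∧ ∀ y ∈ hi, m < y

theorem cdense_of (c : α → Bool)
    (d1 : ∀ g h : α, g < h → ∀ col, ∃ m, c m = col ∧ g < m ∧ m < h)
    (d2 : ∀ g : α, ∀ col, ∃ m, c m = col ∧ m < g)
    (d3 : ∀ g : α, ∀ col, ∃ m, c m = col ∧ g < m)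
    (d4 : ∀ col, ∃ m, c m = col) : CDense c := by
  intro lo hi hlohi col
  rcases Finset.eq_empty_or_nonempty lo with rfl | nlo
  · rcases Finset.eq_empty_or_nonempty hi with rfl | nhi
    · rcases d4 col with ⟨m, hm⟩
      exact ⟨m, hm, by simp, by simp⟩
    · rcases d2 (hi.min' nhi) col with ⟨m, hm, hlt⟩
      exact ⟨m, hm, by simp, fun y hy => lt_of_lt_of_le hlt (hi.min'_le y hy)⟩
  · rcases Finset.eq_empty_or_nonempty hi with rfl | nhi
    · rcases d3 (lo.max' nlo) col with ⟨m, hm, hlt⟩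
      exact ⟨m, hm, fun x hx => lt_of_le_of_lt (lo.le_max' x hx) hlt, by simp⟩
    · rcases d1 (lo.max' nlo) (hi.min' nhi)
        (hlohi _ (lo.max'_mem nlo) _ (hi.min'_mem nhi)) col with ⟨m, hm, h1, h2⟩
      exact ⟨m, hm, fun x hx => lt_of_le_of_lt (lo.le_max' x hx) h1,
        fun y hy => lt_of_lt_of_le h2 (hi.min'_le y hy)⟩

variable (cα : α → Bool) (cβ : β → Bool)

/-- colored partial isomorphisms -/
def CPI : Type _ :=
  { f : Finset (α × β) //
    (∀ p ∈ f, ∀ q ∈ f, cmp (Prod.fst p) (Prod.fst q) = cmp (Prod.snd p) (Prod.snd q)) ∧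
      ∀ p ∈ f, cβ (Prod.snd p) = cα (Prod.fst p) }

instance : Inhabited (CPI cα cβ) :=
  ⟨⟨∅, fun _p h => (Finset.notMem_empty _ h).elim, fun _p h => (Finset.notMem_empty _ h).elim⟩⟩

instance : Preorder (CPI cα cβ) := Subtype.preorder _

variable {cα cβ}

theorem CPI.exists_across (hβd : CDense cβ) (f : CPI cα cβ) (a : α) :
    ∃ b : β, cβ b = cα a ∧ ∀ p ∈ f.val, cmp (Prod.fst p) a = cmp (Prod.snd p) b := by
  by_cases h : ∃ b, (a, b) ∈ f.val
  · rcases h with ⟨b, hb⟩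
    exact ⟨b, f.prop.2 _ hb, fun p hp => f.prop.1 _ hp _ hb⟩
  have : ∀ x ∈ (f.val.filter fun p : α × β => p.fst < a).image Prod.snd,
      ∀ y ∈ (f.val.filter fun p : α × β => a < p.fst).image Prod.snd, x < y := by
    intro x hx y hy
    rw [Finset.mem_image] at hx hy
    rcases hx with ⟨p, hp1, rfl⟩
    rcases hy with ⟨q, hq1, rfl⟩
    rw [Finset.mem_filter] at hp1 hq1
    rw [← lt_iff_lt_of_cmp_eq_cmp (f.prop.1 _ hp1.1 _ hq1.1)]
    exact lt_trans hp1.right hq1.right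
  rcases hβd _ _ this (cα a) with ⟨b, hbcol, hb, hb'⟩
  refine ⟨b, hbcol, ?_⟩
  rintro ⟨p1, p2⟩ hp
  have hne : p1 ≠ a := fun he => h ⟨p2, he ▸ hp⟩
  rcases lt_or_gt_of_ne hne with hl | hr
  · have : p1 < a ∧ p2 < b :=
      ⟨hl, hb _ (Finset.mem_image.mpr ⟨(p1, p2), Finset.mem_filter.mpr ⟨hp, hl⟩, rfl⟩)⟩
    rw [← cmp_eq_lt_iff, ← cmp_eq_lt_iff] at this
    exact this.1.trans this.2.symm
  · have : a < p1 ∧ b < p2 :=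
      ⟨hr, hb' _ (Finset.mem_image.mpr ⟨(p1, p2), Finset.mem_filter.mpr ⟨hp, hr⟩, rfl⟩)⟩
    rw [← cmp_eq_gt_iff, ← cmp_eq_gt_iff] at this
    exact this.1.trans this.2.symm

/-- symmetry -/
protected def CPI.comm (f : CPI cα cβ) : CPI cβ cα := by
  refine ⟨f.val.image (Equiv.prodComm _ _), ?_, ?_⟩
  · intro p hp q hq
    rw [Finset.mem_image] at hp hq
    rcases hp with ⟨p', hp', rfl⟩
    rcases hq with ⟨q', hq', rfl⟩
    exact (f.prop.1 _ hp' _ hq').symm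
  · intro p hp
    rw [Finset.mem_image] at hp
    rcases hp with ⟨p', hp', rfl⟩
    exact (f.prop.2 _ hp').symm

/-- defined at a : α -/
def CPI.definedAtLeft (hβd : CDense cβ) (a : α) : Order.Cofinal (CPI cα cβ) where
  carrier := {f | ∃ b : β, (a, b) ∈ f.val}
  isCofinal f := by
    rcases CPI.exists_across hβd f a with ⟨b, hbcol, a_b⟩
    refine ⟨⟨insert (a, b) f.val, fun p hp q hq => ?_, fun p hp => ?_⟩,
      ⟨b, Finset.mem_insert_self _ _⟩, Finset.subset_insert _ _⟩
    · rw [Finset.mem_insert] at hp hq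
      rcases hp with (rfl | pf) <;> rcases hq with (rfl | qf)
      · simp only [cmp_self_eq_eq]
      · rw [cmp_eq_cmp_symm]; exact a_b _ qf
      · exact a_b _ pf
      · exact f.prop.1 _ pf _ qf
    · rw [Finset.mem_insert] at hp
      rcases hp with rfl | pf
      · exact hbcol
      · exact f.prop.2 _ pf

def CPI.definedAtRight (hαd : CDense cα) (b : β) : Order.Cofinal (CPI cα cβ) where
  carrier := {f | ∃ a, (a, b) ∈ f.val}
  isCofinal f := by
    rcases (CPI.definedAtLeft hαd b).isCofinal f.comm with ⟨f', ⟨a, ha⟩, hl⟩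
    refine ⟨f'.comm, ⟨a, ?_⟩, ?_⟩
    · change (a, b) ∈ f'.val.image _
      rw [← Finset.mem_coe, Finset.coe_image]
      exact ⟨(b, a), ha, rfl⟩
    · change f.val ⊆ f'.val.image _
      intro p hp
      have : (Equiv.prodComm α β) p ∈ f.comm.val := by
        change _ ∈ f.val.image _
        rw [← Finset.mem_coe, Finset.coe_image]
        exact ⟨p, hp, rfl⟩
      have h2 := hl this
      rw [← Finset.mem_coe, Finset.coe_image]
      exact ⟨_, h2, by simp⟩

theorem exists_colored_orderIso [Countable α] [Countable β]
    (hαd : CDense cα) (hβd : CDense cβ) :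
    ∃ e : α ≃o β, ∀ x, cβ (e x) = cα x := by
  cases nonempty_encodable α
  cases nonempty_encodable β
  let to_cofinal : α ⊕ β → Order.Cofinal (CPI cα cβ) := fun p =>
    Sum.recOn p (fun a => CPI.definedAtLeft hβd a) fun b => CPI.definedAtRight hαd b
  let our_ideal : Order.Ideal (CPI cα cβ) := Order.idealOfCofinals default to_cofinal
  have hF : ∀ a : α, ∃ b : β, ∃ f ∈ our_ideal, (a, b) ∈ f.val := by
    intro a
    rcases Order.cofinal_meets_idealOfCofinals default to_cofinal (Sum.inl a) with ⟨f, ⟨b, hb⟩, hf⟩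
    exact ⟨b, f, hf, hb⟩
  have hG : ∀ b : β, ∃ a : α, ∃ f ∈ our_ideal, (a, b) ∈ f.val := by
    intro b
    rcases Order.cofinal_meets_idealOfCofinals default to_cofinal (Sum.inr b) with ⟨f, ⟨a, ha⟩, hf⟩
    exact ⟨a, f, hf, ha⟩
  choose F hF' using hF
  choose G hG' using hG
  refine ⟨OrderIso.ofCmpEqCmp F G fun a b => ?_, fun a => ?_⟩
  · rcases hF' a with ⟨f, hf, ha⟩
    rcases hG' b with ⟨g, hg, hb⟩
    rcases our_ideal.directed _ hf _ hg with ⟨m, _, fm, gm⟩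
    exact m.prop.1 (a, _) (fm ha) (_, b) (gm hb)
  · rcases hF' a with ⟨f, _, ha⟩
    exact f.prop.2 _ ha



/-! ### Gaps of a Cantor set in an interval -/

def IsGapOf (a b : ℝ) (K : Set ℝ) (s : Set ℝ) : Prop :=
  ∃ x ∈ Set.Icc a b \ K, s = connectedComponentIn (Set.Icc a b \ K) x

abbrev Gap (a b : ℝ) (K : Set ℝ) := {s : Set ℝ // IsGapOf a b K s}

noncomputable def gl {a b : ℝ} {K : Set ℝ} (g : Gap a b K) : ℝ := sInf g.1
noncomputable def gr {a b : ℝ} {K : Set ℝ} (g : Gap a b K) : ℝ := sSup g.1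

variable {a b : ℝ} {K : Set ℝ}

theorem U_open (hcl : IsClosed K) (ha : a ∈ K) (hb : b ∈ K) :
    IsOpen (Set.Icc a b \ K) := by
  have h : Set.Icc a b \ K = Set.Ioo a b \ K := by
    ext x
    constructor
    · rintro ⟨⟨h1, h2⟩, hx⟩
      refine ⟨⟨h1.lt_of_ne ?_, h2.lt_of_ne' ?_⟩, hx⟩
      · rintro rfl; exact hx ha
      · rintro rfl; exact hx hb
    · rintro ⟨h1, hx⟩
      exact ⟨⟨h1.1.le, h1.2.le⟩, hx⟩
  rw [h]
  exact isOpen_Ioo.sdiff hcl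

theorem gap_subset (g : Gap a b K) : g.1 ⊆ Set.Icc a b \ K := by
  obtain ⟨x, hx, hgx⟩ := g.2
  rw [hgx]
  exact connectedComponentIn_subset _ _

theorem gap_spec (hK : IsCantorSet K) (hsub : K ⊆ Set.Icc a b) (ha : a ∈ K) (hb : b ∈ K)
    (g : Gap a b K) :
    g.1 = Set.Ioo (gl g) (gr g) ∧ gl g < gr g ∧ gl g ∈ K ∧ gr g ∈ K := by
  have hUopen : IsOpen (Set.Icc a b \ K) := U_open hK.2.1.isClosed ha hb
  obtain ⟨x, hx, hgx⟩ := g.2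
  set U := Set.Icc a b \ K with hU
  set s := connectedComponentIn U x with hs
  have hxs : x ∈ s := mem_connectedComponentIn hx
  have hsU : s ⊆ U := connectedComponentIn_subset _ _
  have hso : IsOpen s := hUopen.connectedComponentIn
  have hpre : IsPreconnected s := isPreconnected_connectedComponentIn
  have hne : s.Nonempty := ⟨x, hxs⟩
  have hbdd : BddAbove s := ⟨b, fun y hy => (hsU hy).1.2⟩
  have hbddb : BddBelow s := ⟨a, fun y hy => (hsU hy).1.1⟩
  have key : ∀ y ∈ s, sInf s < y ∧ y < sSup s := by
    intro y hy
    rcases Metric.isOpen_iff.mp hso y hy with ⟨ε, hε, hball⟩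
    have h1 : y - ε / 2 ∈ s := by
      apply hball
      rw [Metric.mem_ball, Real.dist_eq, show y - ε / 2 - y = -(ε / 2) by ring, abs_neg,
        abs_of_pos (by linarith)]
      linarith
    have h2 : y + ε / 2 ∈ s := by
      apply hball
      rw [Metric.mem_ball, Real.dist_eq, show y + ε / 2 - y = ε / 2 by ring,
        abs_of_pos (by linarith)]
      linarith
    constructor
    · have := csInf_le hbddb h1; linarith
    · have := le_csSup hbdd h2; linarith
  have hpq : sInf s < sSup s := (key x hxs).1.trans (key x hxs).2
  have hsEq : s = Set.Ioo (sInf s) (sSup s) := by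
    ext y
    constructor
    · intro hy; exact ⟨(key y hy).1, (key y hy).2⟩
    · intro hy
      obtain ⟨z1, hz1, hz1y⟩ := exists_lt_of_csInf_lt hne hy.1
      obtain ⟨z2, hz2, hyz2⟩ := exists_lt_of_lt_csSup hne hy.2
      exact (hpre.ordConnected).out hz1 hz2 ⟨hz1y.le, hyz2.le⟩
  have hpa : a ≤ sInf s := le_csInf hne fun y hy => (hsU hy).1.1
  have hqb : sSup s ≤ b := csSup_le hne fun y hy => (hsU hy).1.2
  have hpK : sInf s ∈ K := by
    by_contra hpK
    have hpU : sInf s ∈ U := ⟨⟨hpa, (hpq.trans_le hqb).le⟩, hpK⟩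
    rcases Metric.isOpen_iff.mp hUopen (sInf s) hpU with ⟨ε, hε, hball⟩
    set ε' := min (ε / 2) ((sSup s - sInf s) / 2) with hε'def
    have hε'pos : 0 < ε' := lt_min (by linarith) (by linarith)
    have hε'ε : ε' < ε := (min_le_left _ _).trans_lt (by linarith)
    have hε'q : sInf s + ε' < sSup s := by
      have := min_le_right (ε / 2) ((sSup s - sInf s) / 2)
      have : ε' ≤ (sSup s - sInf s) / 2 := this
      linarith
    obtain ⟨z, hz, hz2⟩ := exists_lt_of_csInf_lt hne (show sInf s < sInf s + ε' by linarith)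
    have hzIoo : z ∈ Set.Ioo (sInf s) (sSup s) := hsEq ▸ hz
    have htU : Set.Ioo (sInf s - ε') (sSup s) ⊆ U := by
      intro w hw
      rcases le_or_gt w (sInf s) with hwp | hwp
      · apply hball
        rw [Metric.mem_ball, Real.dist_eq, abs_of_nonpos (by linarith)]
        linarith [hw.1]
      · exact hsU (hsEq ▸ (⟨hwp, hw.2⟩ : w ∈ Set.Ioo (sInf s) (sSup s)))
    have hts : Set.Ioo (sInf s - ε') (sSup s) ⊆ s := by
      have h1 : connectedComponentIn U x = connectedComponentIn U z := connectedComponentIn_eq hz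
      have h2 := isPreconnected_Ioo.subset_connectedComponentIn
        (show z ∈ Set.Ioo (sInf s - ε') (sSup s) from ⟨by linarith [hzIoo.1], hzIoo.2⟩) htU
      exact h2.trans (hs.trans h1).symm.subset
    have hcontra : sInf s ∈ s := hts ⟨by linarith, hpq⟩
    exact lt_irrefl (sInf s) (hsEq.subset hcontra).1
  have hqK : sSup s ∈ K := by
    by_contra hqK
    have hqU : sSup s ∈ U := ⟨⟨hpa.trans hpq.le, hqb⟩, hqK⟩
    rcases Metric.isOpen_iff.mp hUopen (sSup s) hqU with ⟨ε, hε, hball⟩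
    set ε' := min (ε / 2) ((sSup s - sInf s) / 2) with hε'def
    have hε'pos : 0 < ε' := lt_min (by linarith) (by linarith)
    have hε'ε : ε' < ε := (min_le_left _ _).trans_lt (by linarith)
    have hε'q : sInf s < sSup s - ε' := by
      have : ε' ≤ (sSup s - sInf s) / 2 := min_le_right _ _
      linarith
    obtain ⟨z, hz, hz2⟩ := exists_lt_of_lt_csSup hne (show sSup s - ε' < sSup s by linarith)
    have hzIoo : z ∈ Set.Ioo (sInf s) (sSup s) := hsEq ▸ hz
    have htU : Set.Ioo (sInf s) (sSup s + ε') ⊆ U := by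
      intro w hw
      rcases lt_or_ge w (sSup s) with hwp | hwp
      · exact hsU (hsEq ▸ (⟨hw.1, hwp⟩ : w ∈ Set.Ioo (sInf s) (sSup s)))
      · apply hball
        rw [Metric.mem_ball, Real.dist_eq, abs_of_nonneg (by linarith)]
        linarith [hw.2]
    have hts : Set.Ioo (sInf s) (sSup s + ε') ⊆ s := by
      have h1 : connectedComponentIn U x = connectedComponentIn U z := connectedComponentIn_eq hz
      have h2 := isPreconnected_Ioo.subset_connectedComponentIn
        (show z ∈ Set.Ioo (sInf s) (sSup s + ε') from ⟨hzIoo.1, by linarith [hzIoo.2]⟩) htU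
      exact h2.trans (hs.trans h1).symm.subset
    have hcontra : sSup s ∈ s := hts ⟨hpq, by linarith⟩
    exact lt_irrefl (sSup s) (hsEq.subset hcontra).2
  have hgl : gl g = sInf s := by rw [gl, hgx]
  have hgr : gr g = sSup s := by rw [gr, hgx]
  rw [hgl, hgr]
  exact ⟨by rw [hgx]; exact hsEq, hpq, hpK, hqK⟩


variable (hK : IsCantorSet K) (hsub : K ⊆ Set.Icc a b) (ha : a ∈ K) (hb : b ∈ K)
include hK hsub ha hb

theorem gap_eq_of_mem {g h : Gap a b K} {x : ℝ} (hxg : x ∈ g.1) (hxh : x ∈ h.1) : g = h := by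
  obtain ⟨xg, hxgU, hgx⟩ := g.2
  obtain ⟨xh, hxhU, hhx⟩ := h.2
  apply Subtype.ext
  have h1 : g.1 = connectedComponentIn (Set.Icc a b \ K) x := by
    rw [hgx]; exact connectedComponentIn_eq (by rw [← hgx]; exact hxg)
  have h2 : h.1 = connectedComponentIn (Set.Icc a b \ K) x := by
    rw [hhx]; exact connectedComponentIn_eq (by rw [← hhx]; exact hxh)
  rw [h1, h2]

theorem gl_lt_gr (g : Gap a b K) : gl g < gr g := (gap_spec hK hsub ha hb g).2.1

theorem gap_eq_Ioo (g : Gap a b K) : g.1 = Set.Ioo (gl g) (gr g) :=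
  (gap_spec hK hsub ha hb g).1

theorem gl_mem (g : Gap a b K) : gl g ∈ K := (gap_spec hK hsub ha hb g).2.2.1
theorem gr_mem (g : Gap a b K) : gr g ∈ K := (gap_spec hK hsub ha hb g).2.2.2

theorem gl_ge (g : Gap a b K) : a ≤ gl g := (hsub (gl_mem hK hsub ha hb g)).1
theorem gr_le (g : Gap a b K) : gr g ≤ b := (hsub (gr_mem hK hsub ha hb g)).2

theorem gl_inj : Function.Injective (gl (a := a) (b := b) (K := K)) := by
  intro g h hgh
  have hg := gap_spec hK hsub ha hb g
  have hh := gap_spec hK hsub ha hb h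
  set y := (gl g + min (gr g) (gr h)) / 2 with hy
  have h1 : gl g < min (gr g) (gr h) := lt_min hg.2.1 (hgh ▸ hh.2.1)
  have hyg : y ∈ g.1 := by
    rw [hg.1]
    constructor
    · simp only [hy]; linarith
    · have := min_le_left (gr g) (gr h); simp only [hy]; linarith
  have hyh : y ∈ h.1 := by
    rw [hh.1]
    constructor
    · rw [← hgh]; simp only [hy]; linarith
    · have := min_le_right (gr g) (gr h); simp only [hy]; linarith
  exact gap_eq_of_mem hK hsub ha hb hyg hyh

theorem gap_disjoint_lt {g h : Gap a b K} (hlt : gl g < gl h) : gr g ≤ gl h := by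
  by_contra hcon
  push_neg at hcon
  set y := (gl h + min (gr g) (gr h)) / 2 with hy
  have h1 : gl h < min (gr g) (gr h) := lt_min hcon (gl_lt_gr hK hsub ha hb h)
  have hyg : y ∈ g.1 := by
    rw [gap_eq_Ioo hK hsub ha hb]
    constructor
    · simp only [hy]; linarith
    · have := min_le_left (gr g) (gr h); simp only [hy]; linarith
  have hyh : y ∈ h.1 := by
    rw [gap_eq_Ioo hK hsub ha hb]
    constructor
    · simp only [hy]; linarith
    · have := min_le_right (gr g) (gr h); simp only [hy]; linarith
  have := gap_eq_of_mem hK hsub ha hb hyg hyh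
  rw [this] at hlt
  exact lt_irrefl _ hlt

/-- If `K ∩ (v,s) = ∅` with `s ∈ K`, `a ≤ v < s`, then `(v,s)` is contained in a gap
whose right endpoint is exactly `s`. -/
theorem gap_of_empty {v s : ℝ} (hvs : v < s) (hva : a ≤ v) (hsK : s ∈ K)
    (hempty : K ∩ Set.Ioo v s = ∅) :
    ∃ m : Gap a b K, gl m ≤ v ∧ gr m = s ∧ (v ∈ K → gl m = v) := by
  have hsb : s ≤ b := (hsub hsK).2
  have hIooU : Set.Ioo v s ⊆ Set.Icc a b \ K := by
    intro w hw
    refine ⟨⟨hva.trans hw.1.le, hw.2.le.trans hsb⟩, fun hwK => ?_⟩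
    exact absurd (Set.mem_inter hwK hw) (by rw [hempty]; exact Set.notMem_empty w)
  set x := (v + s) / 2 with hx
  have hxIoo : x ∈ Set.Ioo v s := ⟨by simp only [hx]; linarith, by simp only [hx]; linarith⟩
  have hxU : x ∈ Set.Icc a b \ K := hIooU hxIoo
  refine ⟨⟨connectedComponentIn (Set.Icc a b \ K) x, x, hxU, rfl⟩, ?_⟩
  set m : Gap a b K := ⟨connectedComponentIn (Set.Icc a b \ K) x, x, hxU, rfl⟩ with hm
  have hsubm : Set.Ioo v s ⊆ m.1 :=
    isPreconnected_Ioo.subset_connectedComponentIn hxIoo hIooU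
  have hmIoo := gap_eq_Ioo hK hsub ha hb m
  have hmne : (Set.Ioo v s).Nonempty := ⟨x, hxIoo⟩
  have hbddA : BddAbove m.1 := ⟨b, fun y hy => (gap_subset m hy).1.2⟩
  have hbddB : BddBelow m.1 := ⟨a, fun y hy => (gap_subset m hy).1.1⟩
  have hglv : gl m ≤ v := by
    have h1 : sInf m.1 ≤ sInf (Set.Ioo v s) := csInf_le_csInf hbddB hmne hsubm
    rw [csInf_Ioo hvs] at h1
    exact h1
  have hgrs : gr m = s := by
    have h1 : s ≤ gr m := by
      have h2 : sSup (Set.Ioo v s) ≤ sSup m.1 := csSup_le_csSup hbddA hmne hsubm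
      rw [csSup_Ioo hvs] at h2
      exact h2
    rcases h1.lt_or_eq with h2 | h2
    · exfalso
      have hsnot : s ∉ m.1 := fun hs' => (gap_subset m hs').2 hsK
      exact hsnot (hmIoo ▸ (⟨hglv.trans_lt hvs, h2⟩ : s ∈ Set.Ioo (gl m) (gr m)))
    · exact h2.symm
  refine ⟨hglv, hgrs, fun hvK => ?_⟩
  rcases hglv.lt_or_eq with h2 | h2
  · exfalso
    have hvnot : v ∉ m.1 := fun hv' => (gap_subset m hv').2 hvK
    exact hvnot (hmIoo ▸ (⟨h2, hgrs ▸ hvs⟩ : v ∈ Set.Ioo (gl m) (gr m)))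
  · exact h2

theorem isolated_contra {v p q : ℝ} (hv : v ∈ K) (hp : p < v) (hq : v < q)
    (h1 : K ∩ Set.Ioo p v = ∅) (h2 : K ∩ Set.Ioo v q = ∅) : False := by
  have hacc : AccPt v (Filter.principal K) := hK.2.2.1.acc v hv
  rw [accPt_iff_nhds] at hacc
  obtain ⟨y, ⟨hy1, hy2⟩, hy3⟩ := hacc (Set.Ioo p q) (isOpen_Ioo.mem_nhds ⟨hp, hq⟩)
  rcases lt_trichotomy y v with h | h | h
  · exact absurd (Set.mem_inter hy2 (⟨hy1.1, h⟩ : y ∈ Set.Ioo p v)) (by rw [h1]; exact Set.notMem_empty y)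
  · exact hy3 h
  · exact absurd (Set.mem_inter hy2 (⟨h, hy1.2⟩ : y ∈ Set.Ioo v q)) (by rw [h2]; exact Set.notMem_empty y)

/-- Inside any nondegenerate interval with endpoints in `K` there is a gap. -/
theorem gap_inside {z y : ℝ} (hz : z ∈ K) (hy : y ∈ K) (hzy : z < y) :
    ∃ g : Gap a b K, z ≤ gl g ∧ gl g < gr g ∧ gr g ≤ y ∧ z < gr g := by
  have hnotsub : ¬ Set.Ioo z y ⊆ K := by
    intro hss
    have hIcc : Set.Icc z y ⊆ K := by
      have h1 : closure (Set.Ioo z y) ⊆ closure K := closure_mono hss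
      rw [closure_Ioo hzy.ne, hK.2.1.isClosed.closure_eq] at h1
      exact h1
    have := hK.2.2.2 (Set.Icc z y) hIcc isPreconnected_Icc
    exact absurd (this ⟨le_refl z, hzy.le⟩ ⟨hzy.le, le_refl y⟩) hzy.ne
  obtain ⟨w, hw1, hw2⟩ := Set.not_subset.mp hnotsub
  have hwU : w ∈ Set.Icc a b \ K :=
    ⟨⟨(hsub hz).1.trans hw1.1.le, hw1.2.le.trans (hsub hy).2⟩, hw2⟩
  set g : Gap a b K := ⟨connectedComponentIn (Set.Icc a b \ K) w, w, hwU, rfl⟩ with hg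
  have hgIoo := gap_eq_Ioo hK hsub ha hb g
  have hwg : w ∈ g.1 := mem_connectedComponentIn hwU
  have hwg2 : w ∈ Set.Ioo (gl g) (gr g) := hgIoo ▸ hwg
  have hzg : z ≤ gl g := by
    by_contra hcon
    push_neg at hcon
    have : z ∈ g.1 := hgIoo ▸ (⟨hcon, hw1.1.trans hwg2.2⟩ : z ∈ Set.Ioo (gl g) (gr g))
    exact (gap_subset g this).2 hz
  have hyg : gr g ≤ y := by
    by_contra hcon
    push_neg at hcon
    have : y ∈ g.1 := hgIoo ▸ (⟨hwg2.1.trans hw1.2, hcon⟩ : y ∈ Set.Ioo (gl g) (gr g))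
    exact (gap_subset g this).2 hy
  exact ⟨g, hzg, gl_lt_gr hK hsub ha hb g, hyg, hw1.1.trans hwg2.2⟩

/-- Right endpoints of gaps approach any point of `K` (other than `a`) from the left. -/
theorem gap_gr_near {y ε : ℝ} (hy : y ∈ K) (hay : a < y) (hε : 0 < ε) :
    ∃ g : Gap a b K, y - ε < gr g ∧ gr g ≤ y := by
  set p := max a (y - ε) with hp
  have hpy : p < y := max_lt hay (by linarith)
  by_cases hne : (K ∩ Set.Ioo p y).Nonempty
  · obtain ⟨z, hzK, hz⟩ := hne
    obtain ⟨g, _, _, hgry, hzgr⟩ := gap_inside hK hsub ha hb hzK hy hz.2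
    exact ⟨g, lt_of_le_of_lt (le_max_right a (y - ε)) (hz.1.trans hzgr), hgry⟩
  · rw [Set.not_nonempty_iff_eq_empty] at hne
    obtain ⟨m, _, hgr, _⟩ := gap_of_empty hK hsub ha hb hpy (le_max_left _ _) hy hne
    exact ⟨m, by rw [hgr]; exact lt_of_le_of_lt (le_max_right a (y-ε)) hpy |>.trans_le le_rfl |> fun _ => by linarith [le_max_right a (y-ε)], hgr.le.trans (le_of_eq rfl)⟩

theorem gr_inj : Function.Injective (gr (a := a) (b := b) (K := K)) := by
  intro g h hgh
  by_contra hne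
  have hglne : gl g ≠ gl h := fun hgl => hne (gl_inj hK hsub ha hb hgl)
  rcases hglne.lt_or_gt with h1 | h1
  · have := gap_disjoint_lt hK hsub ha hb h1
    have := gl_lt_gr hK hsub ha hb h
    rw [← hgh] at this
    linarith [this, gl_lt_gr hK hsub ha hb g]
  · have := gap_disjoint_lt hK hsub ha hb h1
    have := gl_lt_gr hK hsub ha hb g
    rw [hgh] at this
    linarith [this, gl_lt_gr hK hsub ha hb h]

theorem frontier_gap (g : Gap a b K) : frontier g.1 = {gl g, gr g} := by
  rw [gap_eq_Ioo hK hsub ha hb, frontier_Ioo (gl_lt_gr hK hsub ha hb g)]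

theorem gap_inter_empty (g : Gap a b K) : K ∩ g.1 = ∅ := by
  ext y
  simp only [Set.mem_inter_iff, Set.mem_empty_iff_false, iff_false, not_and]
  intro hy hyg
  exact (gap_subset g hyg).2 hy

omit hK hsub ha hb in
theorem gap_nonempty (hK : IsCantorSet K) (hsub : K ⊆ Set.Icc a b) (ha : a ∈ K) (hb : b ∈ K)
    (g : Gap a b K) : g.1.Nonempty := by
  refine ⟨(gl g + gr g) / 2, ?_⟩
  rw [gap_eq_Ioo hK hsub ha hb]
  have := gl_lt_gr hK hsub ha hb g
  exact ⟨by linarith, by linarith⟩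

theorem coreE' (Icol : ℕ → Set ℝ) (hcomp : ∀ i, IsGapOf a b K (Icol i))
    (hdense : closure (⋃ i, frontier (Icol i)) = K) {v s : ℝ} (hvs : v < s) (hvK : v ∈ K)
    (hw : (K ∩ Set.Ioo v s).Nonempty) :
    ∃ m : Gap a b K, (∃ i, m.1 = Icol i) ∧ v ≤ gl m ∧ gl m < s := by
  obtain ⟨w, hwK, hwIoo⟩ := hw
  have hwcl : w ∈ closure (⋃ i, frontier (Icol i)) := by rw [hdense]; exact hwK
  rw [mem_closure_iff] at hwcl
  obtain ⟨e, heIoo, heU⟩ := hwcl (Set.Ioo v s) isOpen_Ioo hwIoo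
  rw [Set.mem_iUnion] at heU
  obtain ⟨i, hei⟩ := heU
  set m : Gap a b K := ⟨Icol i, hcomp i⟩ with hm
  have hfr : frontier m.1 = {gl m, gr m} := frontier_gap hK hsub ha hb m
  have he : e = gl m ∨ e = gr m := by
    have : e ∈ ({gl m, gr m} : Set ℝ) := hfr ▸ hei
    simpa using this
  rcases he with rfl | rfl
  · exact ⟨m, ⟨i, rfl⟩, heIoo.1.le, heIoo.2⟩
  · refine ⟨m, ⟨i, rfl⟩, ?_, (gl_lt_gr hK hsub ha hb m).trans heIoo.2⟩
    by_contra hcon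
    push_neg at hcon
    have hvm : v ∈ m.1 := by
      rw [gap_eq_Ioo hK hsub ha hb]
      exact ⟨hcon, heIoo.1⟩
    exact (gap_subset m hvm).2 hvK

variable {I I' : ℕ → Set ℝ}

noncomputable def gapColor (I : ℕ → Set ℝ) (g : Gap a b K) : Bool :=
  @decide (∃ i, g.1 = I i) (Classical.propDecidable _)

omit hK hsub ha hb in
theorem gapColor_true_iff (g : Gap a b K) : gapColor I g = true ↔ ∃ i, g.1 = I i := by
  rw [gapColor]
  exact @decide_eq_true_iff _ (Classical.propDecidable _)

variable (hIcomp : ∀ i, IsGapOf a b K (I i)) (hI'comp : ∀ i, IsGapOf a b K (I' i))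
  (hIcover : ∀ x ∈ Set.Icc a b \ K,
    (∃ i, connectedComponentIn (Set.Icc a b \ K) x = I i) ∨
    (∃ i, connectedComponentIn (Set.Icc a b \ K) x = I' i))
  (hIdisj : ∀ i k, I i ∩ I' k = ∅)
  (hIdense : closure (⋃ i, frontier (I i)) = K)
  (hI'dense : closure (⋃ i, frontier (I' i)) = K)

include hIcover hIdisj in
theorem gapColor_false_iff (g : Gap a b K) : gapColor I g = false ↔ ∃ i, g.1 = I' i := by
  rw [← Bool.not_eq_true, gapColor_true_iff]
  constructor
  · intro h
    obtain ⟨x, hx, hgx⟩ := g.2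
    rcases hIcover x hx with ⟨i, hi⟩ | ⟨i, hi⟩
    · exact absurd ⟨i, hgx ▸ hi⟩ h
    · exact ⟨i, hgx ▸ hi⟩
  · rintro ⟨i, hi⟩ ⟨k, hk⟩
    obtain ⟨y, hy⟩ := gap_nonempty hK hsub ha hb g
    have : y ∈ I k ∩ I' i := ⟨hk ▸ hy, hi ▸ hy⟩
    rw [hIdisj k i] at this
    exact this

include hIcomp hI'comp hIcover hIdisj hIdense hI'dense in
theorem coreE (col : Bool) {v s : ℝ} (hvs : v < s) (hvK : v ∈ K)
    (hw : (K ∩ Set.Ioo v s).Nonempty) :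
    ∃ m : Gap a b K, gapColor I m = col ∧ v ≤ gl m ∧ gl m < s := by
  cases col
  · obtain ⟨m, ⟨i, hi⟩, h1, h2⟩ := coreE' hK hsub ha hb I' hI'comp hI'dense hvs hvK hw
    exact ⟨m, (gapColor_false_iff hK hsub ha hb hIcover hIdisj m).mpr ⟨i, hi⟩, h1, h2⟩
  · obtain ⟨m, ⟨i, hi⟩, h1, h2⟩ := coreE' hK hsub ha hb I hIcomp hIdense hvs hvK hw
    exact ⟨m, (gapColor_true_iff m).mpr ⟨i, hi⟩, h1, h2⟩

include hIcomp hI'comp hIcover hIdisj hIdense hI'dense in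
theorem no_adjacent_left (g : Gap a b K) : a < gl g := by
  rcases (gl_ge hK hsub ha hb g).lt_or_eq with h | heq
  · exact h
  exfalso
  have hD : ∃ D : ℕ → Set ℝ, (∀ i, IsGapOf a b K (D i)) ∧
      closure (⋃ i, frontier (D i)) = K ∧ ∀ i, g.1 ≠ D i := by
    cases hcol : gapColor I g
    · refine ⟨I, hIcomp, hIdense, fun i hi => ?_⟩
      rw [(gapColor_true_iff g).mpr ⟨i, hi⟩] at hcol
      simp at hcol
    · refine ⟨I', hI'comp, hI'dense, fun i hi => ?_⟩
      rw [(gapColor_false_iff hK hsub ha hb hIcover hIdisj g).mpr ⟨i, hi⟩] at hcol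
      simp at hcol
  obtain ⟨D, hDcomp, hDdense, hDne⟩ := hD
  have hacl : a ∈ closure (⋃ i, frontier (D i)) := by rw [hDdense]; exact ha
  rw [mem_closure_iff] at hacl
  have hagr : a < gr g := lt_of_le_of_lt (le_of_eq heq) (gl_lt_gr hK hsub ha hb g)
  obtain ⟨e, heIoo, heU⟩ := hacl (Set.Ioo (a - 1) (gr g)) isOpen_Ioo ⟨by linarith, hagr⟩
  rw [Set.mem_iUnion] at heU
  obtain ⟨i, hei⟩ := heU
  set m : Gap a b K := ⟨D i, hDcomp i⟩ with hm
  have he : e = gl m ∨ e = gr m := by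
    have : e ∈ ({gl m, gr m} : Set ℝ) := (frontier_gap hK hsub ha hb m) ▸ hei
    simpa using this
  have heK : e ∈ K := by
    rcases he with rfl | rfl
    · exact gl_mem hK hsub ha hb m
    · exact gr_mem hK hsub ha hb m
  have hea : e = a := by
    rcases ((hsub heK).1).lt_or_eq with h1 | h1
    · exfalso
      have : e ∈ g.1 := by
        rw [gap_eq_Ioo hK hsub ha hb, ← heq]
        exact ⟨h1, heIoo.2⟩
      exact (gap_subset g this).2 heK
    · exact h1.symm
  rcases he with he | he
  · have : m = g := gl_inj hK hsub ha hb (by rw [← he, hea]; exact heq)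
    exact hDne i (by rw [← this])
  · have h1 : a ≤ gl m := gl_ge hK hsub ha hb m
    have h2 : gl m < gr m := gl_lt_gr hK hsub ha hb m
    rw [← he, hea] at h2
    linarith

include hIcomp hI'comp hIcover hIdisj hIdense hI'dense in
theorem no_adjacent_right (g : Gap a b K) : gr g < b := by
  rcases (gr_le hK hsub ha hb g).lt_or_eq with h | heq
  · exact h
  exfalso
  have hD : ∃ D : ℕ → Set ℝ, (∀ i, IsGapOf a b K (D i)) ∧
      closure (⋃ i, frontier (D i)) = K ∧ ∀ i, g.1 ≠ D i := by
    cases hcol : gapColor I g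
    · refine ⟨I, hIcomp, hIdense, fun i hi => ?_⟩
      rw [(gapColor_true_iff g).mpr ⟨i, hi⟩] at hcol
      simp at hcol
    · refine ⟨I', hI'comp, hI'dense, fun i hi => ?_⟩
      rw [(gapColor_false_iff hK hsub ha hb hIcover hIdisj g).mpr ⟨i, hi⟩] at hcol
      simp at hcol
  obtain ⟨D, hDcomp, hDdense, hDne⟩ := hD
  have hbcl : b ∈ closure (⋃ i, frontier (D i)) := by rw [hDdense]; exact hb
  rw [mem_closure_iff] at hbcl
  have hglb : gl g < b := lt_of_lt_of_le (gl_lt_gr hK hsub ha hb g) (le_of_eq heq)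
  obtain ⟨e, heIoo, heU⟩ := hbcl (Set.Ioo (gl g) (b + 1)) isOpen_Ioo ⟨hglb, by linarith⟩
  rw [Set.mem_iUnion] at heU
  obtain ⟨i, hei⟩ := heU
  set m : Gap a b K := ⟨D i, hDcomp i⟩ with hm
  have he : e = gl m ∨ e = gr m := by
    have : e ∈ ({gl m, gr m} : Set ℝ) := (frontier_gap hK hsub ha hb m) ▸ hei
    simpa using this
  have heK : e ∈ K := by
    rcases he with rfl | rfl
    · exact gl_mem hK hsub ha hb m
    · exact gr_mem hK hsub ha hb m
  have heb : e = b := by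
    rcases ((hsub heK).2).lt_or_eq with h1 | h1
    · exfalso
      have : e ∈ g.1 := by
        rw [gap_eq_Ioo hK hsub ha hb, heq]
        exact ⟨heIoo.1, h1⟩
      exact (gap_subset g this).2 heK
    · exact h1
  rcases he with he | he
  · have h1 : gl m < gr m := gl_lt_gr hK hsub ha hb m
    have h2 : gr m ≤ b := gr_le hK hsub ha hb m
    rw [← he, heb] at h1
    linarith
  · have : m = g := gr_inj hK hsub ha hb (by rw [← he, heb]; exact heq.symm)
    exact hDne i (by rw [← this])

include hIcomp hI'comp hIcover hIdisj hIdense hI'dense in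
theorem dens_between {g h : Gap a b K} (hlt : gl g < gl h) (col : Bool) :
    ∃ m : Gap a b K, gapColor I m = col ∧ gl g < gl m ∧ gl m < gl h := by
  have hvs' : gr g ≤ gl h := gap_disjoint_lt hK hsub ha hb hlt
  have hempty_g : K ∩ Set.Ioo (gl g) (gr g) = ∅ := by
    rw [← gap_eq_Ioo hK hsub ha hb]; exact gap_inter_empty hK hsub ha hb g
  have hempty_h : K ∩ Set.Ioo (gl h) (gr h) = ∅ := by
    rw [← gap_eq_Ioo hK hsub ha hb]; exact gap_inter_empty hK hsub ha hb h
  rcases hvs'.lt_or_eq with hvs | hvs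
  · by_cases hw : (K ∩ Set.Ioo (gr g) (gl h)).Nonempty
    · obtain ⟨m, hcol, h1, h2⟩ := coreE hK hsub ha hb hIcomp hI'comp hIcover hIdisj hIdense
        hI'dense col hvs (gr_mem hK hsub ha hb g) hw
      exact ⟨m, hcol, (gl_lt_gr hK hsub ha hb g).trans_le h1, h2⟩
    · exfalso
      rw [Set.not_nonempty_iff_eq_empty] at hw
      exact isolated_contra hK hsub ha hb (gr_mem hK hsub ha hb g)
        (gl_lt_gr hK hsub ha hb g) hvs hempty_g hw
  · exfalso
    refine isolated_contra (q := gr h) hK hsub ha hb (gr_mem hK hsub ha hb g)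
      (gl_lt_gr hK hsub ha hb g) ?_ hempty_g ?_
    · rw [hvs]; exact gl_lt_gr hK hsub ha hb h
    · rw [hvs]; exact hempty_h

include hIcomp hI'comp hIcover hIdisj hIdense hI'dense in
theorem dens_below (g : Gap a b K) (col : Bool) :
    ∃ m : Gap a b K, gapColor I m = col ∧ gl m < gl g := by
  have hvs : a < gl g := no_adjacent_left hK hsub ha hb hIcomp hI'comp hIcover hIdisj hIdense
    hI'dense g
  by_cases hw : (K ∩ Set.Ioo a (gl g)).Nonempty
  · obtain ⟨m, hcol, _, h2⟩ := coreE hK hsub ha hb hIcomp hI'comp hIcover hIdisj hIdense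
      hI'dense col hvs ha hw
    exact ⟨m, hcol, h2⟩
  · exfalso
    rw [Set.not_nonempty_iff_eq_empty] at hw
    obtain ⟨m, _, _, hm⟩ := gap_of_empty hK hsub ha hb hvs le_rfl (gl_mem hK hsub ha hb g) hw
    have := no_adjacent_left hK hsub ha hb hIcomp hI'comp hIcover hIdisj hIdense hI'dense m
    rw [hm ha] at this
    exact lt_irrefl a this

include hIcomp hI'comp hIcover hIdisj hIdense hI'dense in
theorem dens_above (g : Gap a b K) (col : Bool) :
    ∃ m : Gap a b K, gapColor I m = col ∧ gl g < gl m := by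
  have hvs : gr g < b := no_adjacent_right hK hsub ha hb hIcomp hI'comp hIcover hIdisj hIdense
    hI'dense g
  by_cases hw : (K ∩ Set.Ioo (gr g) b).Nonempty
  · obtain ⟨m, hcol, h1, _⟩ := coreE hK hsub ha hb hIcomp hI'comp hIcover hIdisj hIdense
      hI'dense col hvs (gr_mem hK hsub ha hb g) hw
    exact ⟨m, hcol, (gl_lt_gr hK hsub ha hb g).trans_le h1⟩
  · exfalso
    rw [Set.not_nonempty_iff_eq_empty] at hw
    obtain ⟨m, _, hm, _⟩ := gap_of_empty hK hsub ha hb hvs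
      ((gl_ge hK hsub ha hb g).trans (gl_lt_gr hK hsub ha hb g).le) hb hw
    have := no_adjacent_right hK hsub ha hb hIcomp hI'comp hIcover hIdisj hIdense hI'dense m
    rw [hm] at this
    exact lt_irrefl b this

theorem gap_exists : ∃ g : Gap a b K, True := by
  have hab : a < b := by
    have hacc : AccPt a (Filter.principal K) := hK.2.2.1.acc a ha
    rw [accPt_iff_nhds] at hacc
    obtain ⟨y, ⟨_, hy2⟩, hy3⟩ := hacc Set.univ Filter.univ_mem
    have h1 : a ≤ y := (hsub hy2).1
    have h2 : y ≤ b := (hsub hy2).2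
    exact lt_of_lt_of_le (h1.lt_of_ne (Ne.symm hy3)) h2
  have : ¬ Set.Icc a b ⊆ K := by
    intro hss
    have := hK.2.2.2 (Set.Icc a b) hss isPreconnected_Icc
    exact hab.ne (this ⟨le_rfl, hab.le⟩ ⟨hab.le, le_rfl⟩)
  obtain ⟨x, hx1, hx2⟩ := Set.not_subset.mp this
  exact ⟨⟨connectedComponentIn (Set.Icc a b \ K) x, x, ⟨hx1, hx2⟩, rfl⟩, trivial⟩

include hIcomp hI'comp hIcover hIdisj hIdense hI'dense in
theorem dens_exists (col : Bool) : ∃ m : Gap a b K, gapColor I m = col := by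
  obtain ⟨g, -⟩ := gap_exists hK hsub ha hb
  obtain ⟨m, hcol, -⟩ := dens_above hK hsub ha hb hIcomp hI'comp hIcover hIdisj hIdense
    hI'dense g col
  exact ⟨m, hcol⟩

theorem gap_countable : Countable (Gap a b K) := by
  have hq : ∀ g : Gap a b K, ∃ q : ℚ, (q : ℝ) ∈ g.1 := by
    intro g
    obtain ⟨q, hq1, hq2⟩ := exists_rat_btwn (gl_lt_gr hK hsub ha hb g)
    exact ⟨q, by rw [gap_eq_Ioo hK hsub ha hb]; exact ⟨hq1, hq2⟩⟩
  choose f hf using hq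
  have hinj : Function.Injective f := by
    intro g h hgh
    exact gap_eq_of_mem hK hsub ha hb (hf g) (hgh ▸ hf h)
  exact Function.Injective.countable hinj

end Stmt17Aux

open Stmt17Aux

theorem stmt17 (a b c d : ℝ) (K₁ K₂ : Set ℝ)
    (hK₁ : IsCantorSet K₁) (hK₂ : IsCantorSet K₂)
    (hK₁sub : K₁ ⊆ Set.Icc a b) (hK₂sub : K₂ ⊆ Set.Icc c d)
    (ha : a ∈ K₁) (hb : b ∈ K₁) (hc : c ∈ K₂) (hd : d ∈ K₂)
    (I I' : ℕ → Set ℝ) (J J' : ℕ → Set ℝ)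
    (hIcomp : ∀ i, ∃ x ∈ Set.Icc a b \ K₁, I i = connectedComponentIn (Set.Icc a b \ K₁) x)
    (hI'comp : ∀ i, ∃ x ∈ Set.Icc a b \ K₁, I' i = connectedComponentIn (Set.Icc a b \ K₁) x)
    (hIcover : ∀ x ∈ Set.Icc a b \ K₁,
      (∃ i, connectedComponentIn (Set.Icc a b \ K₁) x = I i) ∨
      (∃ i, connectedComponentIn (Set.Icc a b \ K₁) x = I' i))
    (hIdisj : ∀ i k, I i ∩ I' k = ∅)
    (hIdense : closure (⋃ i, frontier (I i)) = K₁)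
    (hI'dense : closure (⋃ i, frontier (I' i)) = K₁)
    (hJcomp : ∀ j, ∃ x ∈ Set.Icc c d \ K₂, J j = connectedComponentIn (Set.Icc c d \ K₂) x)
    (hJ'comp : ∀ j, ∃ x ∈ Set.Icc c d \ K₂, J' j = connectedComponentIn (Set.Icc c d \ K₂) x)
    (hJcover : ∀ x ∈ Set.Icc c d \ K₂,
      (∃ j, connectedComponentIn (Set.Icc c d \ K₂) x = J j) ∨
      (∃ j, connectedComponentIn (Set.Icc c d \ K₂) x = J' j))
    (hJdisj : ∀ j k, J j ∩ J' k = ∅)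
    (hJdense : closure (⋃ j, frontier (J j)) = K₂)
    (hJ'dense : closure (⋃ j, frontier (J' j)) = K₂) :
    ∃ ψ : ℝ → ℝ, ContinuousOn ψ (Set.Icc a b) ∧ StrictMonoOn ψ (Set.Icc a b) ∧
      ψ '' Set.Icc a b = Set.Icc c d ∧ ψ '' K₁ = K₂ ∧
      ψ '' (⋃ i, I i) = ⋃ j, J j := by
  classical
  -- hypothesis repackaging
  have hIcomp' : ∀ i, IsGapOf a b K₁ (I i) := hIcomp
  have hI'comp' : ∀ i, IsGapOf a b K₁ (I' i) := hI'comp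
  have hJcomp' : ∀ j, IsGapOf c d K₂ (J j) := hJcomp
  have hJ'comp' : ∀ j, IsGapOf c d K₂ (J' j) := hJ'comp
  -- linear orders on the gap types
  letI L1 : LinearOrder (Gap a b K₁) := LinearOrder.lift' gl (gl_inj hK₁ hK₁sub ha hb)
  letI L2 : LinearOrder (Gap c d K₂) := LinearOrder.lift' gl (gl_inj hK₂ hK₂sub hc hd)
  haveI : Countable (Gap a b K₁) := gap_countable hK₁ hK₁sub ha hb
  haveI : Countable (Gap c d K₂) := gap_countable hK₂ hK₂sub hc hd
  have hlt1 : ∀ g h : Gap a b K₁,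
      @LT.lt _ (@Preorder.toLT _ (@PartialOrder.toPreorder _ L1.toPartialOrder)) g h ↔
        gl g < gl h := fun g h => Iff.rfl
  have hlt2 : ∀ g h : Gap c d K₂,
      @LT.lt _ (@Preorder.toLT _ (@PartialOrder.toPreorder _ L2.toPartialOrder)) g h ↔
        gl g < gl h := fun g h => Iff.rfl
  -- basic gap facts, side 1
  have glr₁ : ∀ g : Gap a b K₁, gl g < gr g := gl_lt_gr hK₁ hK₁sub ha hb
  have gIoo₁ : ∀ g : Gap a b K₁, g.1 = Set.Ioo (gl g) (gr g) := gap_eq_Ioo hK₁ hK₁sub ha hb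
  have glK₁ : ∀ g : Gap a b K₁, gl g ∈ K₁ := gl_mem hK₁ hK₁sub ha hb
  have grK₁ : ∀ g : Gap a b K₁, gr g ∈ K₁ := gr_mem hK₁ hK₁sub ha hb
  have glge₁ : ∀ g : Gap a b K₁, a ≤ gl g := gl_ge hK₁ hK₁sub ha hb
  have grle₁ : ∀ g : Gap a b K₁, gr g ≤ b := gr_le hK₁ hK₁sub ha hb
  have gdisj₁ : ∀ {g h : Gap a b K₁}, gl g < gl h → gr g ≤ gl h :=
    fun h => gap_disjoint_lt hK₁ hK₁sub ha hb h
  have geq₁ : ∀ {g h : Gap a b K₁} {x : ℝ}, x ∈ g.1 → x ∈ h.1 → g = h :=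
    fun h1 h2 => gap_eq_of_mem hK₁ hK₁sub ha hb h1 h2
  -- basic gap facts, side 2
  have glr₂ : ∀ g : Gap c d K₂, gl g < gr g := gl_lt_gr hK₂ hK₂sub hc hd
  have gIoo₂ : ∀ g : Gap c d K₂, g.1 = Set.Ioo (gl g) (gr g) := gap_eq_Ioo hK₂ hK₂sub hc hd
  have glK₂ : ∀ g : Gap c d K₂, gl g ∈ K₂ := gl_mem hK₂ hK₂sub hc hd
  have grK₂ : ∀ g : Gap c d K₂, gr g ∈ K₂ := gr_mem hK₂ hK₂sub hc hd
  have glge₂ : ∀ g : Gap c d K₂, c ≤ gl g := gl_ge hK₂ hK₂sub hc hd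
  have grle₂ : ∀ g : Gap c d K₂, gr g ≤ d := gr_le hK₂ hK₂sub hc hd
  have gdisj₂ : ∀ {g h : Gap c d K₂}, gl g < gl h → gr g ≤ gl h :=
    fun h => gap_disjoint_lt hK₂ hK₂sub hc hd h
  have geq₂ : ∀ {g h : Gap c d K₂} {x : ℝ}, x ∈ g.1 → x ∈ h.1 → g = h :=
    fun h1 h2 => gap_eq_of_mem hK₂ hK₂sub hc hd h1 h2
  have hab : a < b := by
    obtain ⟨g, -⟩ := gap_exists hK₁ hK₁sub ha hb
    exact lt_of_le_of_lt (glge₁ g) (lt_of_lt_of_le (glr₁ g) (grle₁ g))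
  have hcd : c < d := by
    obtain ⟨g, -⟩ := gap_exists hK₂ hK₂sub hc hd
    exact lt_of_le_of_lt (glge₂ g) (lt_of_lt_of_le (glr₂ g) (grle₂ g))
  -- colored density
  have hcd1 : CDense (gapColor I (a := a) (b := b) (K := K₁)) := by
    refine cdense_of _ ?_ ?_ ?_ ?_
    · intro g h hgh col
      obtain ⟨m, h1, h2, h3⟩ := dens_between hK₁ hK₁sub ha hb hIcomp' hI'comp' hIcover hIdisj
        hIdense hI'dense ((hlt1 g h).mp hgh) col
      exact ⟨m, h1, (hlt1 g m).mpr h2, (hlt1 m h).mpr h3⟩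
    · intro g col
      obtain ⟨m, h1, h2⟩ := dens_below hK₁ hK₁sub ha hb hIcomp' hI'comp' hIcover hIdisj
        hIdense hI'dense g col
      exact ⟨m, h1, (hlt1 m g).mpr h2⟩
    · intro g col
      obtain ⟨m, h1, h2⟩ := dens_above hK₁ hK₁sub ha hb hIcomp' hI'comp' hIcover hIdisj
        hIdense hI'dense g col
      exact ⟨m, h1, (hlt1 g m).mpr h2⟩
    · exact dens_exists hK₁ hK₁sub ha hb hIcomp' hI'comp' hIcover hIdisj hIdense hI'dense
  have hcd2 : CDense (gapColor J (a := c) (b := d) (K := K₂)) := by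
    refine cdense_of _ ?_ ?_ ?_ ?_
    · intro g h hgh col
      obtain ⟨m, h1, h2, h3⟩ := dens_between hK₂ hK₂sub hc hd hJcomp' hJ'comp' hJcover hJdisj
        hJdense hJ'dense ((hlt2 g h).mp hgh) col
      exact ⟨m, h1, (hlt2 g m).mpr h2, (hlt2 m h).mpr h3⟩
    · intro g col
      obtain ⟨m, h1, h2⟩ := dens_below hK₂ hK₂sub hc hd hJcomp' hJ'comp' hJcover hJdisj
        hJdense hJ'dense g col
      exact ⟨m, h1, (hlt2 m g).mpr h2⟩
    · intro g col
      obtain ⟨m, h1, h2⟩ := dens_above hK₂ hK₂sub hc hd hJcomp' hJ'comp' hJcover hJdisj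
        hJdense hJ'dense g col
      exact ⟨m, h1, (hlt2 g m).mpr h2⟩
    · exact dens_exists hK₂ hK₂sub hc hd hJcomp' hJ'comp' hJcover hJdisj hJdense hJ'dense
  obtain ⟨e, hecol⟩ := exists_colored_orderIso hcd1 hcd2
  -- the order isomorphism in endpoint terms
  have hemono : ∀ {g h : Gap a b K₁}, gl g < gl h → gl (e g) < gl (e h) := by
    intro g h hgh
    have h2 : gl (e g) ≤ gl (e h) := e.map_rel_iff.mpr (le_of_lt hgh)
    refine h2.lt_of_ne fun hEq => ?_
    have : e g = e h := gl_inj hK₂ hK₂sub hc hd hEq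
    exact (ne_of_lt hgh) (congrArg gl (e.toEquiv.injective this))
  have hegap : ∀ {g h : Gap a b K₁}, gl g < gl h → gr (e g) ≤ gl (e h) :=
    fun hgh => gdisj₂ (hemono hgh)
  obtain ⟨einv, heinv⟩ : ∃ einv : Gap c d K₂ → Gap a b K₁, ∀ u, e (einv u) = u :=
    ⟨e.toEquiv.symm, fun u => e.toEquiv.apply_symm_apply u⟩
  have hrefl : ∀ {g₃ g : Gap a b K₁}, gl (e g₃) < gl (e g) → gl g₃ < gl g := by
    intro g₃ g h4
    rcases lt_trichotomy (gl g₃) (gl g) with h | h | h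
    · exact h
    · exfalso
      rw [gl_inj hK₁ hK₁sub ha hb h] at h4
      exact lt_irrefl _ h4
    · exact absurd (hemono h) (not_lt.mpr h4.le)
  -- definition of the data of ψ
  obtain ⟨S, hSdef⟩ : ∃ S : ℝ → Set ℝ, ∀ x, S x =
      insert c ((fun g : Gap a b K₁ => gr (e g)) '' {g : Gap a b K₁ | gr g ≤ x}) :=
    ⟨_, fun _ => rfl⟩
  obtain ⟨A, hAdef⟩ : ∃ A : Gap a b K₁ → ℝ → ℝ, ∀ g x, A g x =
      gl (e g) + (x - gl g) * ((gr (e g) - gl (e g)) / (gr g - gl g)) :=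
    ⟨_, fun _ _ => rfl⟩
  obtain ⟨ψ, hψx⟩ : ∃ ψ : ℝ → ℝ, ∀ x, ψ x =
      if h : x ∈ Set.Icc a b \ K₁ then
        A ⟨connectedComponentIn (Set.Icc a b \ K₁) x, x, h, rfl⟩ x
      else sSup (S x) := ⟨_, fun _ => rfl⟩
  have hSmem : ∀ x z : ℝ, z ∈ S x ↔ z = c ∨ ∃ g : Gap a b K₁, gr g ≤ x ∧ gr (e g) = z := by
    intro x z
    rw [hSdef x]
    simp only [Set.mem_insert_iff, Set.mem_image, Set.mem_setOf_eq]
  have hSbdd : ∀ x, BddAbove (S x) := by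
    intro x
    refine ⟨d, fun z hz => ?_⟩
    rcases (hSmem x z).mp hz with rfl | ⟨g, _, rfl⟩
    · exact hcd.le
    · exact grle₂ (e g)
  have hSne : ∀ x, (S x).Nonempty := fun x => ⟨c, (hSmem x c).mpr (Or.inl rfl)⟩
  have hcleS : ∀ x, c ≤ sSup (S x) :=
    fun x => le_csSup (hSbdd x) ((hSmem x c).mpr (Or.inl rfl))
  have hSled : ∀ x, sSup (S x) ≤ d := by
    intro x
    refine csSup_le (hSne x) fun z hz => ?_
    rcases (hSmem x z).mp hz with rfl | ⟨g, _, rfl⟩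
    · exact hcd.le
    · exact grle₂ (e g)
  have hSmono : ∀ {x y : ℝ}, x ≤ y → sSup (S x) ≤ sSup (S y) := by
    intro x y hxy
    refine csSup_le_csSup (hSbdd y) (hSne x) fun z hz => ?_
    rcases (hSmem x z).mp hz with rfl | ⟨g, hg, rfl⟩
    · exact (hSmem y _).mpr (Or.inl rfl)
    · exact (hSmem y _).mpr (Or.inr ⟨g, hg.trans hxy, rfl⟩)
  have hψK : ∀ x, x ∈ K₁ → ψ x = sSup (S x) := by
    intro x hx
    rw [hψx x]
    exact dif_neg fun h => h.2 hx
  have hval_r : ∀ g : Gap a b K₁, sSup (S (gr g)) = gr (e g) := by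
    intro g
    apply le_antisymm
    · refine csSup_le (hSne _) fun z hz => ?_
      rcases (hSmem _ z).mp hz with rfl | ⟨g₂, hg₂, rfl⟩
      · exact (glge₂ (e g)).trans (glr₂ (e g)).le
      · rcases eq_or_ne g₂ g with rfl | hne
        · exact le_rfl
        · have hglne : gl g₂ ≠ gl g := fun hEq => hne (gl_inj hK₁ hK₁sub ha hb hEq)
          rcases hglne.lt_or_gt with h1 | h1
          · exact (hegap h1).trans (glr₂ (e g)).le
          · exact absurd hg₂ (not_le.mpr (lt_of_le_of_lt (gdisj₁ h1) (glr₁ g₂)))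
    · exact le_csSup (hSbdd _) ((hSmem _ _).mpr (Or.inr ⟨g, le_rfl, rfl⟩))
  have hval_l : ∀ g : Gap a b K₁, sSup (S (gl g)) = gl (e g) := by
    intro g
    apply le_antisymm
    · refine csSup_le (hSne _) fun z hz => ?_
      rcases (hSmem _ z).mp hz with rfl | ⟨g₂, hg₂, rfl⟩
      · exact glge₂ (e g)
      · exact hegap (lt_of_lt_of_le (glr₁ g₂) hg₂)
    · by_contra hcon
      push_neg at hcon
      rcases (glge₂ (e g)).lt_or_eq with hcy | hcy
      · obtain ⟨h₂, hh1, hh2⟩ := gap_gr_near hK₂ hK₂sub hc hd (glK₂ (e g)) hcy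
          (sub_pos.mpr hcon)
        have heg₃ : e (einv h₂) = h₂ := heinv h₂
        have h4 : gl h₂ < gl (e g) := lt_of_lt_of_le (glr₂ h₂) hh2
        have h5 : gl (einv h₂) < gl g := hrefl (by rw [heg₃]; exact h4)
        have h7 : gr (e (einv h₂)) ∈ S (gl g) :=
          (hSmem _ _).mpr (Or.inr ⟨einv h₂, gdisj₁ h5, rfl⟩)
        have h8 := le_csSup (hSbdd _) h7
        rw [heg₃] at h8
        linarith
      · rw [← hcy] at hcon
        exact absurd (hcleS (gl g)) (not_le.mpr hcon)
  have hsurj : ∀ y ∈ K₂, ∃ x, x ∈ K₁ ∧ sSup (S x) = y := by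
    intro y hy
    obtain ⟨T, hTdef⟩ : ∃ T : Set ℝ, T =
        insert a ((fun g : Gap a b K₁ => gr g) '' {g : Gap a b K₁ | gr (e g) ≤ y}) := ⟨_, rfl⟩
    have hTmem : ∀ z, z ∈ T ↔ z = a ∨ ∃ g : Gap a b K₁, gr (e g) ≤ y ∧ gr g = z := by
      intro z
      rw [hTdef]
      simp only [Set.mem_insert_iff, Set.mem_image, Set.mem_setOf_eq]
    have hTsub : T ⊆ K₁ := by
      intro z hz
      rcases (hTmem z).mp hz with rfl | ⟨g, _, rfl⟩
      · exact ha
      · exact grK₁ g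
    have hTne : T.Nonempty := ⟨a, (hTmem a).mpr (Or.inl rfl)⟩
    have hTbdd : BddAbove T := ⟨b, fun z hz => (hK₁sub (hTsub hz)).2⟩
    have hxK : sSup T ∈ K₁ :=
      closure_minimal hTsub hK₁.2.1.isClosed (csSup_mem_closure hTne hTbdd)
    refine ⟨sSup T, hxK, le_antisymm ?_ ?_⟩
    · refine csSup_le (hSne _) fun z hz => ?_
      rcases (hSmem _ z).mp hz with rfl | ⟨g, hgx, rfl⟩
      · exact (hK₂sub hy).1
      · by_contra hgt
        push_neg at hgt
        have hyle : y ≤ gl (e g) := by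
          by_contra hyl
          push_neg at hyl
          have hmem : y ∈ (e g).1 := by rw [gIoo₂ (e g)]; exact ⟨hyl, hgt⟩
          exact (gap_subset (e g) hmem).2 hy
        have hub : ∀ t ∈ T, t ≤ gl g := by
          intro t ht
          rcases (hTmem t).mp ht with rfl | ⟨g₂, hg₂, rfl⟩
          · exact glge₁ g
          · have h4 : gl (e g₂) < gl (e g) := lt_of_lt_of_le (glr₂ (e g₂)) (hg₂.trans hyle)
            exact gdisj₁ (hrefl h4)
        have h5 : sSup T ≤ gl g := csSup_le hTne hub
        linarith [glr₁ g, hgx]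
    · rcases ((hK₂sub hy).1).lt_or_eq with hcy | hcy
      · by_contra hcon
        push_neg at hcon
        obtain ⟨h₂, hh1, hh2⟩ := gap_gr_near hK₂ hK₂sub hc hd hy hcy (sub_pos.mpr hcon)
        have heg₃ : e (einv h₂) = h₂ := heinv h₂
        have h6 : gr (einv h₂) ∈ T :=
          (hTmem _).mpr (Or.inr ⟨einv h₂, by rw [heg₃]; exact hh2, rfl⟩)
        have h7 : gr (einv h₂) ≤ sSup T := le_csSup hTbdd h6
        have h8 : gr (e (einv h₂)) ∈ S (sSup T) := (hSmem _ _).mpr (Or.inr ⟨einv h₂, h7, rfl⟩)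
        have h9 := le_csSup (hSbdd _) h8
        rw [heg₃] at h9
        linarith
      · rw [← hcy]
        exact hcleS _
  -- affine facts
  have hAl : ∀ g : Gap a b K₁, A g (gl g) = gl (e g) := by
    intro g
    rw [hAdef]
    simp
  have hAr : ∀ g : Gap a b K₁, A g (gr g) = gr (e g) := by
    intro g
    rw [hAdef]
    have h1 : gr g - gl g ≠ 0 := ne_of_gt (sub_pos.mpr (glr₁ g))
    field_simp
    ring
  have hAmono : ∀ (g : Gap a b K₁) {x y : ℝ}, x < y → A g x < A g y := by
    intro g x y hxy
    rw [hAdef, hAdef]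
    have h1 : 0 < (gr (e g) - gl (e g)) / (gr g - gl g) :=
      div_pos (sub_pos.mpr (glr₂ (e g))) (sub_pos.mpr (glr₁ g))
    have h2 := mul_lt_mul_of_pos_right (sub_lt_sub_right hxy (gl g)) h1
    linarith
  have hAmem : ∀ (g : Gap a b K₁) {x : ℝ}, x ∈ Set.Ioo (gl g) (gr g) →
      A g x ∈ Set.Ioo (gl (e g)) (gr (e g)) := by
    intro g x hx
    constructor
    · rw [← hAl g]; exact hAmono g hx.1
    · rw [← hAr g]; exact hAmono g hx.2
  have hAsurj : ∀ (g : Gap a b K₁) (y : ℝ), y ∈ Set.Ioo (gl (e g)) (gr (e g)) →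
      ∃ x ∈ Set.Ioo (gl g) (gr g), A g x = y := by
    intro g y hy
    have hd1 : (0:ℝ) < gr g - gl g := sub_pos.mpr (glr₁ g)
    have hd2 : (0:ℝ) < gr (e g) - gl (e g) := sub_pos.mpr (glr₂ (e g))
    have hne1 : gr g - gl g ≠ 0 := ne_of_gt hd1
    have hne2 : gr (e g) - gl (e g) ≠ 0 := ne_of_gt hd2
    refine ⟨gl g + (y - gl (e g)) * ((gr g - gl g) / (gr (e g) - gl (e g))), ⟨?_, ?_⟩, ?_⟩
    · have := mul_pos (sub_pos.mpr hy.1) (div_pos hd1 hd2)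
      linarith
    · have h1 : (y - gl (e g)) * ((gr g - gl g) / (gr (e g) - gl (e g))) <
          (gr (e g) - gl (e g)) * ((gr g - gl g) / (gr (e g) - gl (e g))) :=
        mul_lt_mul_of_pos_right (by linarith [hy.2]) (div_pos hd1 hd2)
      have h2 : (gr (e g) - gl (e g)) * ((gr g - gl g) / (gr (e g) - gl (e g))) = gr g - gl g := by
        field_simp
      linarith
    · rw [hAdef]
      field_simp
      ring
  have hψgap : ∀ (x : ℝ) (hx : x ∈ Set.Icc a b \ K₁) (g : Gap a b K₁),
      x ∈ g.1 → ψ x = A g x := by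
    intro x hx g hxg
    rw [hψx x, dif_pos hx]
    have hEq : (⟨connectedComponentIn (Set.Icc a b \ K₁) x, x, hx, rfl⟩ : Gap a b K₁) = g :=
      geq₁ (mem_connectedComponentIn hx) hxg
    rw [hEq]
  -- strict monotonicity
  have hmono : StrictMonoOn ψ (Set.Icc a b) := by
    intro x hxI y hyI hxy
    by_cases hxU : x ∈ Set.Icc a b \ K₁ <;> by_cases hyU : y ∈ Set.Icc a b \ K₁
    · obtain ⟨gx, hxg⟩ : ∃ gx : Gap a b K₁, x ∈ gx.1 :=
        ⟨⟨connectedComponentIn (Set.Icc a b \ K₁) x, x, hxU, rfl⟩, mem_connectedComponentIn hxU⟩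
      obtain ⟨gy, hyg⟩ : ∃ gy : Gap a b K₁, y ∈ gy.1 :=
        ⟨⟨connectedComponentIn (Set.Icc a b \ K₁) y, y, hyU, rfl⟩, mem_connectedComponentIn hyU⟩
      have hxIoo : x ∈ Set.Ioo (gl gx) (gr gx) := (gIoo₁ gx) ▸ hxg
      have hyIoo : y ∈ Set.Ioo (gl gy) (gr gy) := (gIoo₁ gy) ▸ hyg
      rw [hψgap x hxU gx hxg, hψgap y hyU gy hyg]
      rcases eq_or_ne gx gy with hEq | hne
      · rw [hEq]; exact hAmono gy hxy
      · have hglne : gl gx ≠ gl gy := fun h => hne (gl_inj hK₁ hK₁sub ha hb h)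
        rcases hglne.lt_or_gt with h1 | h1
        · calc A gx x < gr (e gx) := (hAmem gx hxIoo).2
            _ ≤ gl (e gy) := hegap h1
            _ < A gy y := (hAmem gy hyIoo).1
        · exfalso
          have := gdisj₁ h1
          linarith [hyIoo.2, hxIoo.1]
    · have hyK : y ∈ K₁ := by by_contra hyK; exact hyU ⟨hyI, hyK⟩
      obtain ⟨gx, hxg⟩ : ∃ gx : Gap a b K₁, x ∈ gx.1 :=
        ⟨⟨connectedComponentIn (Set.Icc a b \ K₁) x, x, hxU, rfl⟩, mem_connectedComponentIn hxU⟩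
      have hxIoo : x ∈ Set.Ioo (gl gx) (gr gx) := (gIoo₁ gx) ▸ hxg
      have hgry : gr gx ≤ y := by
        by_contra hcon
        push_neg at hcon
        have hmem : y ∈ gx.1 := by rw [gIoo₁ gx]; exact ⟨hxIoo.1.trans hxy, hcon⟩
        exact (gap_subset gx hmem).2 hyK
      rw [hψgap x hxU gx hxg, hψK y hyK]
      calc A gx x < gr (e gx) := (hAmem gx hxIoo).2
        _ = sSup (S (gr gx)) := (hval_r gx).symm
        _ ≤ sSup (S y) := hSmono hgry
    · have hxK : x ∈ K₁ := by by_contra hxK; exact hxU ⟨hxI, hxK⟩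
      obtain ⟨gy, hyg⟩ : ∃ gy : Gap a b K₁, y ∈ gy.1 :=
        ⟨⟨connectedComponentIn (Set.Icc a b \ K₁) y, y, hyU, rfl⟩, mem_connectedComponentIn hyU⟩
      have hyIoo : y ∈ Set.Ioo (gl gy) (gr gy) := (gIoo₁ gy) ▸ hyg
      have hxgl : x ≤ gl gy := by
        by_contra hcon
        push_neg at hcon
        have hmem : x ∈ gy.1 := by rw [gIoo₁ gy]; exact ⟨hcon, hxy.trans hyIoo.2⟩
        exact (gap_subset gy hmem).2 hxK
      rw [hψK x hxK, hψgap y hyU gy hyg]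
      calc sSup (S x) ≤ sSup (S (gl gy)) := hSmono hxgl
        _ = gl (e gy) := hval_l gy
        _ < A gy y := (hAmem gy hyIoo).1
    · have hxK : x ∈ K₁ := by by_contra hxK; exact hxU ⟨hxI, hxK⟩
      have hyK : y ∈ K₁ := by by_contra hyK; exact hyU ⟨hyI, hyK⟩
      obtain ⟨g, h1, _, h3, _⟩ := gap_inside hK₁ hK₁sub ha hb hxK hyK hxy
      rw [hψK x hxK, hψK y hyK]
      calc sSup (S x) ≤ sSup (S (gl g)) := hSmono h1
        _ = gl (e g) := hval_l g
        _ < gr (e g) := glr₂ (e g)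
        _ = sSup (S (gr g)) := (hval_r g).symm
        _ ≤ sSup (S y) := hSmono h3
  -- image of the interval
  have himg : ψ '' Set.Icc a b = Set.Icc c d := by
    apply Set.Subset.antisymm
    · rintro _ ⟨x, hx, rfl⟩
      by_cases hxU : x ∈ Set.Icc a b \ K₁
      · obtain ⟨gx, hxg⟩ : ∃ gx : Gap a b K₁, x ∈ gx.1 :=
          ⟨⟨connectedComponentIn (Set.Icc a b \ K₁) x, x, hxU, rfl⟩, mem_connectedComponentIn hxU⟩
        have hxIoo : x ∈ Set.Ioo (gl gx) (gr gx) := (gIoo₁ gx) ▸ hxg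
        rw [hψgap x hxU gx hxg]
        have h := hAmem gx hxIoo
        exact ⟨(glge₂ (e gx)).trans h.1.le, h.2.le.trans (grle₂ (e gx))⟩
      · have hxK : x ∈ K₁ := by by_contra h; exact hxU ⟨hx, h⟩
        rw [hψK x hxK]
        exact ⟨hcleS x, hSled x⟩
    · intro y hy
      by_cases hyK : y ∈ K₂
      · obtain ⟨x, hxK, hxv⟩ := hsurj y hyK
        exact ⟨x, hK₁sub hxK, by rw [hψK x hxK]; exact hxv⟩
      · have hyU : y ∈ Set.Icc c d \ K₂ := ⟨hy, hyK⟩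
        obtain ⟨h₂, hyg⟩ : ∃ h₂ : Gap c d K₂, y ∈ h₂.1 :=
          ⟨⟨connectedComponentIn (Set.Icc c d \ K₂) y, y, hyU, rfl⟩, mem_connectedComponentIn hyU⟩
        have heg : e (einv h₂) = h₂ := heinv h₂
        have hyIoo : y ∈ Set.Ioo (gl (e (einv h₂))) (gr (e (einv h₂))) := by
          rw [heg]
          exact (gIoo₂ h₂) ▸ hyg
        obtain ⟨x, hxIoo, hxA⟩ := hAsurj (einv h₂) y hyIoo
        have hxg : x ∈ (einv h₂).1 := (gIoo₁ (einv h₂)).symm ▸ hxIoo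
        have hxU : x ∈ Set.Icc a b \ K₁ := gap_subset (einv h₂) hxg
        exact ⟨x, hxU.1, by rw [hψgap x hxU (einv h₂) hxg]; exact hxA⟩
  -- image of K₁
  have himgK : ψ '' K₁ = K₂ := by
    apply Set.Subset.antisymm
    · rintro _ ⟨x, hxK, rfl⟩
      by_contra hnK
      have hψIcc : ψ x ∈ Set.Icc c d := by
        rw [hψK x hxK]; exact ⟨hcleS x, hSled x⟩
      have hyU : ψ x ∈ Set.Icc c d \ K₂ := ⟨hψIcc, hnK⟩
      obtain ⟨h₂, hyg⟩ : ∃ h₂ : Gap c d K₂, ψ x ∈ h₂.1 :=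
        ⟨⟨connectedComponentIn (Set.Icc c d \ K₂) (ψ x), ψ x, hyU, rfl⟩,
          mem_connectedComponentIn hyU⟩
      have hyIoo : ψ x ∈ Set.Ioo (gl h₂) (gr h₂) := (gIoo₂ h₂) ▸ hyg
      have heg : e (einv h₂) = h₂ := heinv h₂
      have hxnot : x ∉ (einv h₂).1 := fun hmem => (gap_subset (einv h₂) hmem).2 hxK
      rw [gIoo₁ (einv h₂)] at hxnot
      rcases le_or_gt x (gl (einv h₂)) with hle | hlt
      · have h5 : sSup (S x) ≤ gl (e (einv h₂)) :=
          le_of_le_of_eq (hSmono hle) (hval_l (einv h₂))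
        rw [heg] at h5
        rw [hψK x hxK] at hyIoo
        linarith [hyIoo.1]
      · have hge : gr (einv h₂) ≤ x := by
          by_contra hcon
          push_neg at hcon
          exact hxnot ⟨hlt, hcon⟩
        have h5 : gr (e (einv h₂)) ≤ sSup (S x) :=
          le_of_eq_of_le (hval_r (einv h₂)).symm (hSmono hge)
        rw [heg] at h5
        rw [hψK x hxK] at hyIoo
        linarith [hyIoo.2]
    · intro y hy
      obtain ⟨x, hxK, hxv⟩ := hsurj y hy
      exact ⟨x, hxK, by rw [hψK x hxK]; exact hxv⟩
  -- image of the union of the gaps of the first colour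
  have himgU : ψ '' (⋃ i, I i) = ⋃ j, J j := by
    apply Set.Subset.antisymm
    · rintro _ ⟨x, hxU, rfl⟩
      rw [Set.mem_iUnion] at hxU
      obtain ⟨i, hxi⟩ := hxU
      have hxg : x ∈ (⟨I i, hIcomp' i⟩ : Gap a b K₁).1 := hxi
      have hxU1 : x ∈ Set.Icc a b \ K₁ := gap_subset _ hxg
      have hxIoo : x ∈ Set.Ioo (gl (⟨I i, hIcomp' i⟩ : Gap a b K₁))
          (gr (⟨I i, hIcomp' i⟩ : Gap a b K₁)) := (gIoo₁ _) ▸ hxg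
      have hcol : gapColor J (e ⟨I i, hIcomp' i⟩) = true := by
        rw [hecol ⟨I i, hIcomp' i⟩]
        exact (gapColor_true_iff _).mpr ⟨i, rfl⟩
      obtain ⟨j, hj⟩ := (gapColor_true_iff _).mp hcol
      rw [Set.mem_iUnion]
      refine ⟨j, ?_⟩
      rw [← hj, gIoo₂ (e ⟨I i, hIcomp' i⟩), hψgap x hxU1 ⟨I i, hIcomp' i⟩ hxg]
      exact hAmem _ hxIoo
    · intro y hy
      rw [Set.mem_iUnion] at hy
      obtain ⟨j, hyj⟩ := hy
      have hyg : y ∈ (⟨J j, hJcomp' j⟩ : Gap c d K₂).1 := hyj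
      have heg : e (einv ⟨J j, hJcomp' j⟩) = ⟨J j, hJcomp' j⟩ := heinv ⟨J j, hJcomp' j⟩
      have hcol : gapColor I (einv ⟨J j, hJcomp' j⟩) = true := by
        rw [← hecol (einv ⟨J j, hJcomp' j⟩), heg]
        exact (gapColor_true_iff _).mpr ⟨j, rfl⟩
      obtain ⟨i, hi⟩ := (gapColor_true_iff _).mp hcol
      have hyIoo : y ∈ Set.Ioo (gl (e (einv ⟨J j, hJcomp' j⟩)))
          (gr (e (einv ⟨J j, hJcomp' j⟩))) := by
        rw [heg]
        exact (gIoo₂ _) ▸ hyg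
      obtain ⟨x, hxIoo, hxA⟩ := hAsurj (einv ⟨J j, hJcomp' j⟩) y hyIoo
      have hxg : x ∈ (einv ⟨J j, hJcomp' j⟩).1 := (gIoo₁ _).symm ▸ hxIoo
      have hxU1 : x ∈ Set.Icc a b \ K₁ := gap_subset _ hxg
      refine ⟨x, ?_, by rw [hψgap x hxU1 _ hxg]; exact hxA⟩
      rw [Set.mem_iUnion]
      exact ⟨i, hi ▸ hxg⟩
  -- endpoint values
  have hψa : ψ a = c := by
    have h1 : c ≤ ψ a := by rw [hψK a ha]; exact hcleS a
    have h2 : c ∈ ψ '' Set.Icc a b := by rw [himg]; exact ⟨le_rfl, hcd.le⟩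
    obtain ⟨x₀, hx₀, hx₀v⟩ := h2
    rcases hx₀.1.lt_or_eq with h3 | h3
    · exfalso
      have h4 := hmono (Set.left_mem_Icc.mpr hab.le) hx₀ h3
      rw [hx₀v] at h4
      linarith
    · rw [← h3] at hx₀v
      linarith [hx₀v, h1]
  have hψb : ψ b = d := by
    have h1 : ψ b ≤ d := by rw [hψK b hb]; exact hSled b
    have h2 : d ∈ ψ '' Set.Icc a b := by rw [himg]; exact ⟨hcd.le, le_rfl⟩
    obtain ⟨x₀, hx₀, hx₀v⟩ := h2
    rcases hx₀.2.lt_or_eq with h3 | h3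
    · exfalso
      have h4 := hmono hx₀ (Set.right_mem_Icc.mpr hab.le) h3
      rw [hx₀v] at h4
      linarith
    · rw [h3] at hx₀v
      linarith [hx₀v, h1]
  -- continuity
  have hcont : ContinuousOn ψ (Set.Icc a b) := by
    intro x hx
    have hψxIcc : ψ x ∈ Set.Icc c d := by rw [← himg]; exact ⟨x, hx, rfl⟩
    have hleft : a < x → ContinuousWithinAt ψ (Set.Iic x) x := by
      intro hax
      refine StrictMonoOn.continuousWithinAt_left_of_exists_between hmono
        (Icc_mem_nhdsLE_of_mem ⟨hax, hx.2⟩) ?_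
      intro v hv
      have hcx : c < ψ x := by
        rw [← hψa]
        exact hmono (Set.left_mem_Icc.mpr hab.le) hx hax
      have hu : max v c < ψ x := max_lt hv hcx
      obtain ⟨t, ht1, ht2⟩ := exists_between hu
      have htIcc : t ∈ Set.Icc c d := ⟨(le_max_right v c).trans ht1.le, ht2.le.trans hψxIcc.2⟩
      have htmem : t ∈ ψ '' Set.Icc a b := by rw [himg]; exact htIcc
      obtain ⟨z, hz, hzv⟩ := htmem
      exact ⟨z, hz, by rw [hzv]; exact ⟨(le_max_left v c).trans ht1.le, ht2⟩⟩
    have hright : x < b → ContinuousWithinAt ψ (Set.Ici x) x := by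
      intro hxb
      refine StrictMonoOn.continuousWithinAt_right_of_exists_between hmono
        (Icc_mem_nhdsGE_of_mem ⟨hx.1, hxb⟩) ?_
      intro v hv
      have hxd : ψ x < d := by
        rw [← hψb]
        exact hmono hx (Set.right_mem_Icc.mpr hab.le) hxb
      have hu : ψ x < min v d := lt_min hv hxd
      obtain ⟨t, ht1, ht2⟩ := exists_between hu
      have htIcc : t ∈ Set.Icc c d := ⟨hψxIcc.1.trans ht1.le, ht2.le.trans (min_le_right v d)⟩
      have htmem : t ∈ ψ '' Set.Icc a b := by rw [himg]; exact htIcc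
      obtain ⟨z, hz, hzv⟩ := htmem
      exact ⟨z, hz, by rw [hzv]; exact ⟨ht1, ht2.le.trans (min_le_left v d)⟩⟩
    rcases hx.1.lt_or_eq with hax | hax
    · rcases hx.2.lt_or_eq with hxb | hxb
      · exact (continuousAt_iff_continuous_left_right.mpr
          ⟨hleft hax, hright hxb⟩).continuousWithinAt
      · exact (hleft hax).mono fun z hz => by rw [hxb]; exact hz.2
    · exact (hright (by rw [← hax]; exact hab)).mono fun z hz => by rw [← hax]; exact hz.1
  exact ⟨ψ, hcont, hmono, himg, himgK, himgU⟩
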